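/- Let f be a polynomial in three variables with integer coefficients. If positive integers a, b, c satisfy a² + b² + c² = abc · f(a, b, c), then gcd(a, b, c) = 1 or gcd(a, b, c) = 3. -/

import Mathlib

lemma gcd3_swap (x y z : ℤ) : Int.gcd x (Int.gcd y z) = Int.gcd y (Int.gcd x z) := by
  simp only [Int.gcd, Int.natAbs_natCast]
  rw [← Nat.gcd_assoc, Nat.gcd_comm x.natAbs, Nat.gcd_assoc]

lemma gcd3_comm (x y z : ℤ) : Int.gcd x (Int.gcd y z) = Int.gcd x (Int.gcd z y) := by
  simp only [Int.gcd, Int.natAbs_natCast, Nat.gcd_comm y.natAbs]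

lemma gcd_sub_aux (m x : ℤ) (hm : m ∣ x) : ∀ a : ℤ, Int.gcd a m ∣ Int.gcd (x - a) m := by
  intro a
  apply Int.natCast_dvd_natCast.mp
  apply Int.dvd_coe_gcd
  · exact dvd_sub (dvd_trans (Int.gcd_dvd_right _ _) hm) (Int.gcd_dvd_left _ _)
  · exact Int.gcd_dvd_right _ _

lemma gcd_sub_eq (m x a : ℤ) (hm : m ∣ x) : Int.gcd (x - a) m = Int.gcd a m := by
  apply Nat.dvd_antisymm
  · have := gcd_sub_aux m x hm (x - a)
    simpa using this
  · exact gcd_sub_aux m x hm a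

set_option maxHeartbeats 2000000 in
lemma key : ∀ n : ℕ, ∀ k a b c : ℤ, 0 < c → c ≤ b → b ≤ a → (a + b + c).toNat ≤ n →
    a ^ 2 + b ^ 2 + c ^ 2 = k * (a * b * c) →
    Int.gcd a (Int.gcd b c) = 1 ∨ Int.gcd a (Int.gcd b c) = 3 := by
  intro n
  induction n with
  | zero => intro k a b c hc hcb hba hn _; omega
  | succ n IH =>
    intro k a b c hc hcb hba hn h
    have ha : 0 < a := lt_of_lt_of_le hc (le_trans hcb hba)
    have hb : 0 < b := lt_of_lt_of_le hc hcb
    set A : ℤ := k * b * c - a with hA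
    have hmul : a * A = b ^ 2 + c ^ 2 := by
      rw [hA]; ring_nf; linear_combination -h
    have hApos : 0 < A := by nlinarith
    have heq2 : A ^ 2 + b ^ 2 + c ^ 2 = k * (A * b * c) := by
      linear_combination h + (A - a) * hA
    have hgA : Int.gcd A (Int.gcd b c) = Int.gcd a (Int.gcd b c) := by
      rw [hA]
      apply gcd_sub_eq
      rw [mul_assoc]
      exact Dvd.dvd.mul_left (Dvd.dvd.mul_right (Int.gcd_dvd_left _ _) c) k
    rcases lt_or_ge A a with hlt | hmin
    · -- recursive case
      have hsum : (A + b + c).toNat ≤ n := by omega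
      rcases le_total b A with h1 | h1
      · have := IH k A b c hc hcb h1 hsum heq2
        rwa [hgA] at this
      · rcases le_total c A with h2 | h2
        · have := IH k b A c hc h2 h1 (by omega)
            (by linear_combination heq2)
          rw [gcd3_swap, hgA] at this
          exact this
        · have := IH k b c A hApos h2 hcb (by omega)
            (by linear_combination heq2)
          rw [gcd3_comm, gcd3_swap, hgA] at this
          exact this
    · -- minimal case
      have hsq : a ^ 2 ≤ b ^ 2 + c ^ 2 := by nlinarith
      have habc : 0 < a * b * c := by positivity
      have hk : 0 < k := by nlinarith [habc]
      have hkc : k * c ≤ 4 := by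
        nlinarith [mul_pos ha hb, mul_nonneg (sub_nonneg.mpr hba) hb.le,
          mul_nonneg (sub_nonneg.mpr hcb) (by linarith : (0:ℤ) ≤ b + c)]
      have hc4 : c ≤ 4 := by nlinarith [mul_nonneg (sub_nonneg.mpr hk.le) hc.le]
      have hk4 : k ≤ 4 := by nlinarith [mul_nonneg hk.le (sub_nonneg.mpr hc.le)]
      clear_value A
      clear hgA heq2 hApos hmul hA hmin A hn
      interval_cases k <;> interval_cases c
      -- k=1
      · exact absurd h (by nlinarith [sq_nonneg (a - b)])
      · exact absurd h (by nlinarith [sq_nonneg (a - b)])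
      · -- k=1, c=3 : solution (3,3,3)
        have h1 : a ≤ b + 2 := by nlinarith
        have h2 : a = b ∨ a = b + 1 ∨ a = b + 2 := by omega
        rcases h2 with h2 | h2 | h2
        · have h3 : b ≤ 3 := by nlinarith
          have h4 : b = 3 := le_antisymm h3 hcb
          have h5 : a = 3 := by omega
          rw [h4, h5]
          right; rfl
        · rw [h2] at h
          exact absurd h (by nlinarith)
        · rw [h2] at h
          exact absurd h (by nlinarith)
      · -- k=1, c=4 : impossible
        have h1 : a ≤ b + 2 := by nlinarith
        have h2 : a = b ∨ a = b + 1 ∨ a = b + 2 := by omega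
        rcases h2 with h2 | h2 | h2
        · rw [h2] at h
          exact absurd h (by nlinarith)
        · rw [h2] at h
          obtain ⟨x, hx⟩ : ∃ x : ℤ, 2 * x + 2 * b = 17 :=
            ⟨b * b, by linear_combination -h⟩
          omega
        · rw [h2] at h
          exact absurd h (by nlinarith)
      -- k=2
      · exact absurd h (by nlinarith [sq_nonneg (a - b)])
      · exact absurd h (by nlinarith [sq_nonneg (a - b), mul_nonneg (sub_nonneg.mpr hba) hb.le])
      · omega
      · omega
      -- k=3
      · -- k=3, c=1 : solution (1,1,1)
        have h1 : a ≤ b := by nlinarith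
        have h2 : a = b := le_antisymm h1 hba
        have h3 : b ≤ 1 := by nlinarith
        have h4 : b = 1 := le_antisymm h3 hb
        have h5 : a = 1 := by omega
        rw [h4, h5]
        left; rfl
      · omega
      · omega
      · omega
      -- k=4
      · have h1 : a ≤ b := by nlinarith
        have h2 : a = b := le_antisymm h1 hba
        exact absurd h (by nlinarith)
      · omega
      · omega
      · omega

lemma gcd3_perm (x y z : ℤ) : Int.gcd x (Int.gcd y z) = Int.gcd y (Int.gcd z x) := by
  rw [gcd3_swap, gcd3_comm]

theorem gcd_eq_one_or_three (f : MvPolynomial (Fin 3) ℤ)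
    (a b c : ℤ) (ha : 0 < a) (hb : 0 < b) (hc : 0 < c)
    (h : a ^ 2 + b ^ 2 + c ^ 2 = a * b * c * MvPolynomial.eval ![a, b, c] f) :
    Int.gcd a (Int.gcd b c) = 1 ∨ Int.gcd a (Int.gcd b c) = 3 := by
  set k : ℤ := MvPolynomial.eval ![a, b, c] f with hkdef
  rcases le_total a b with hab | hab <;> rcases le_total b c with hbc | hbc <;>
    rcases le_total a c with hac | hac
  · rw [gcd3_perm, gcd3_perm, gcd3_comm]
    exact key ((c + b + a).toNat) k c b a ha hab hbc le_rfl (by linear_combination h)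
  · rw [gcd3_perm, gcd3_perm, gcd3_comm]
    exact key ((c + b + a).toNat) k c b a ha hab hbc le_rfl (by linear_combination h)
  · rw [gcd3_perm]
    exact key ((b + c + a).toNat) k b c a ha hac hbc le_rfl (by linear_combination h)
  · rw [gcd3_perm, gcd3_comm]
    exact key ((b + a + c).toNat) k b a c hc hac hab le_rfl (by linear_combination h)
  · rw [gcd3_perm, gcd3_perm]
    exact key ((c + a + b).toNat) k c a b hb hab hac le_rfl (by linear_combination h)
  · rw [gcd3_comm]
    exact key ((a + c + b).toNat) k a c b hb hbc hac le_rfl (by linear_combination h)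
  · exact key ((a + b + c).toNat) k a b c hc hbc hab le_rfl (by linear_combination h)
  · exact key ((a + b + c).toNat) k a b c hc hbc hab le_rfl (by linear_combination h)
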